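/- Let α ∈ (1,2) and x > 0. The series Σ_{n=0}^∞ (-1)^n (α+1)^{(n+1)/(α+1)-1} · x^{-(n+1)/(α+1)-1} / ( n! · Γ(1-(n+1)/(α+1)) · Γ(1-(n+2)/(α+1)) ) converges absolutely, i.e. Σ_{n=0}^∞ (α+1)^{(n+1)/(α+1)-1} · x^{-(n+1)/(α+1)-1} · |1/Γ(1-(n+1)/(α+1))| · |1/Γ(1-(n+2)/(α+1))| / n! < ∞. -/

import Mathlib

open Real Filter

/-- Bound on reciprocal Gamma via Euler's reflection formula. -/
lemma recip_Gamma_bound {s : ℝ} (hs : 0 < s) :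
    |1 / Real.Gamma (1 - s)| ≤ Real.Gamma s / Real.pi := by
  have hΓ := Real.Gamma_pos_of_pos hs
  have hπ := Real.pi_pos
  rcases eq_or_ne (Real.Gamma (1 - s)) 0 with h | h
  · rw [h, div_zero, abs_zero]; positivity
  · have habs : 0 < |Real.Gamma (1 - s)| := abs_pos.2 h
    rw [abs_div, abs_one, div_le_div_iff₀ habs hπ]
    have hrefl := Real.Gamma_mul_Gamma_one_sub s
    have hsin : Real.sin (Real.pi * s) ≠ 0 := by
      intro h0
      rw [h0, div_zero] at hrefl
      exact absurd hrefl (mul_ne_zero hΓ.ne' h)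
    have h1 : |Real.sin (Real.pi * s)| ≤ 1 :=
      abs_le.2 ⟨Real.neg_one_le_sin _, Real.sin_le_one _⟩
    have h2 : Real.Gamma s * |Real.Gamma (1 - s)| = |Real.Gamma s * Real.Gamma (1 - s)| := by
      rw [abs_mul, abs_of_pos hΓ]
    rw [one_mul, h2, hrefl, abs_div, abs_of_pos hπ, le_div_iff₀ (abs_pos.2 hsin)]
    nlinarith [abs_nonneg (Real.sin (Real.pi * s))]

/-- Log-convexity bound: `Γ(s+d) ≤ Γ(s) * s^d` for `0 ≤ d ≤ 1`. -/
lemma Gamma_add_le {s d : ℝ} (hs : 0 < s) (hd0 : 0 ≤ d) (hd1 : d ≤ 1) :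
    Real.Gamma (s + d) ≤ Real.Gamma s * s ^ d := by
  have hΓs := Real.Gamma_pos_of_pos hs
  have hΓs1 := Real.Gamma_pos_of_pos (by linarith : (0:ℝ) < s + 1)
  have hΓsd := Real.Gamma_pos_of_pos (by linarith : (0:ℝ) < s + d)
  have key := Real.convexOn_log_Gamma.2 (Set.mem_Ioi.2 hs)
    (Set.mem_Ioi.2 (by linarith : (0:ℝ) < s + 1))
    (by linarith : (0:ℝ) ≤ 1 - d) hd0 (by ring)
  simp only [Function.comp, smul_eq_mul] at key
  rw [show (1 - d) * s + d * (s + 1) = s + d by ring] at key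
  have ea : Real.exp ((1 - d) * Real.log (Real.Gamma s)) = Real.Gamma s ^ (1 - d) := by
    rw [Real.rpow_def_of_pos hΓs, mul_comm]
  have eb : Real.exp (d * Real.log (Real.Gamma (s + 1))) = Real.Gamma (s + 1) ^ d := by
    rw [Real.rpow_def_of_pos hΓs1, mul_comm]
  calc Real.Gamma (s + d) = Real.exp (Real.log (Real.Gamma (s + d))) := (Real.exp_log hΓsd).symm
    _ ≤ Real.exp ((1 - d) * Real.log (Real.Gamma s) + d * Real.log (Real.Gamma (s + 1))) :=
        Real.exp_le_exp.2 key
    _ = Real.Gamma s ^ (1 - d) * Real.Gamma (s + 1) ^ d := by rw [Real.exp_add, ea, eb]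
    _ = Real.Gamma s * s ^ d := by
        rw [Real.Gamma_add_one hs.ne', Real.mul_rpow hs.le hΓs.le,
          show Real.Gamma s ^ (1 - d) * (s ^ d * Real.Gamma s ^ d)
            = Real.Gamma s ^ (1 - d) * Real.Gamma s ^ d * s ^ d by ring,
          ← Real.rpow_add hΓs, sub_add_cancel, Real.rpow_one]

/-- The majorant series is summable. -/
lemma summable_majorant {A : ℝ} (hA : 2 < A) {K : ℝ} (hK : 1 ≤ K) :
    Summable (fun n : ℕ => K ^ (n + 1) *
      (Real.Gamma (((n : ℝ) + 1) / A) * Real.Gamma (((n : ℝ) + 2) / A)) /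
      (n.factorial : ℝ)) := by
  have hA0 : 0 < A := by linarith
  have hK0 : 0 < K := lt_of_lt_of_le one_pos hK
  apply summable_of_ratio_norm_eventually_le (r := 1 / 2) (by norm_num)
  have hT : Tendsto (fun n : ℕ => ((n : ℝ) + 2) ^ (2 / A - 1)) atTop (nhds 0) := by
    have h1 : Tendsto (fun n : ℕ => ((n : ℝ) + 2)) atTop atTop :=
      tendsto_atTop_add_const_right _ 2 tendsto_natCast_atTop_atTop
    have h2 := (tendsto_rpow_neg_atTop (y := 1 - 2 / A) (by
      have : 2 / A < 1 := by rw [div_lt_one hA0]; linarith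
      linarith)).comp h1
    simpa [Function.comp_def, neg_sub] using h2
  have hev := hT.eventually_lt_const (show (0:ℝ) < 1 / (4 * K) by positivity)
  filter_upwards [hev] with n hn
  have hfac : (0:ℝ) < (n.factorial : ℝ) := by exact_mod_cast n.factorial_pos
  set s : ℝ := ((n : ℝ) + 1) / A with hs_def
  have hs0 : 0 < s := by positivity
  have e1 : ((n : ℝ) + 2) / A = s + 1 / A := by rw [hs_def]; ring
  have e1' : ((n : ℝ) + 1 + 1) / A = s + 1 / A := by rw [hs_def]; ring
  have e2 : ((n : ℝ) + 1 + 2) / A = s + 2 / A := by rw [hs_def]; ring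
  have hΓ1 := Real.Gamma_pos_of_pos hs0
  have hΓ2 := Real.Gamma_pos_of_pos (by positivity : (0:ℝ) < s + 1 / A)
  have hΓ3 := Real.Gamma_pos_of_pos (by positivity : (0:ℝ) < s + 2 / A)
  have hd1 : 2 / A ≤ 1 := by rw [div_le_one hA0]; linarith
  have hkey : Real.Gamma (s + 2 / A) ≤ Real.Gamma s * s ^ (2 / A) :=
    Gamma_add_le hs0 (by positivity) hd1
  have hs_le : s ^ (2 / A) ≤ ((n : ℝ) + 2) ^ (2 / A) := by
    apply Real.rpow_le_rpow hs0.le _ (by positivity)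
    rw [hs_def, div_le_iff₀ hA0]
    nlinarith [Nat.cast_nonneg (α := ℝ) n]
  have hsplit : ((n : ℝ) + 2) ^ (2 / A) = ((n : ℝ) + 2) ^ (2 / A - 1) * ((n : ℝ) + 2) := by
    rw [← Real.rpow_add_one (by positivity : ((n : ℝ) + 2) ≠ 0)]
    norm_num
  have hKbound : K * (((n : ℝ) + 2) ^ (2 / A)) ≤ ((n : ℝ) + 1) / 2 := by
    rw [hsplit]
    have h4 : K * (((n : ℝ) + 2) ^ (2 / A - 1) * ((n : ℝ) + 2))
        ≤ K * (1 / (4 * K) * ((n : ℝ) + 2)) := by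
      apply mul_le_mul_of_nonneg_left _ hK0.le
      exact mul_le_mul_of_nonneg_right hn.le (by positivity)
    have h5 : K * (1 / (4 * K) * ((n : ℝ) + 2)) = ((n : ℝ) + 2) / 4 := by
      field_simp
    have h6 : (0:ℝ) ≤ (n : ℝ) := Nat.cast_nonneg n
    linarith
  have hinner : K * Real.Gamma (s + 2 / A) ≤ ((n : ℝ) + 1) / 2 * Real.Gamma s := by
    calc K * Real.Gamma (s + 2 / A) ≤ K * (Real.Gamma s * s ^ (2 / A)) :=
          mul_le_mul_of_nonneg_left hkey hK0.le
      _ ≤ K * (Real.Gamma s * ((n : ℝ) + 2) ^ (2 / A)) := by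
          apply mul_le_mul_of_nonneg_left _ hK0.le
          exact mul_le_mul_of_nonneg_left hs_le hΓ1.le
      _ = Real.Gamma s * (K * ((n : ℝ) + 2) ^ (2 / A)) := by ring
      _ ≤ Real.Gamma s * (((n : ℝ) + 1) / 2) := mul_le_mul_of_nonneg_left hKbound hΓ1.le
      _ = ((n : ℝ) + 1) / 2 * Real.Gamma s := by ring
  have hn1 : (0:ℝ) < (n : ℝ) + 1 := by positivity
  have main : K ^ (n + 1 + 1) * (Real.Gamma (s + 1 / A) * Real.Gamma (s + 2 / A)) /
      (((n : ℝ) + 1) * (n.factorial : ℝ))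
      ≤ 1 / 2 * (K ^ (n + 1) * (Real.Gamma s * Real.Gamma (s + 1 / A)) / (n.factorial : ℝ)) := by
    calc K ^ (n + 1 + 1) * (Real.Gamma (s + 1 / A) * Real.Gamma (s + 2 / A)) /
        (((n : ℝ) + 1) * (n.factorial : ℝ))
        = (K ^ (n + 1) * Real.Gamma (s + 1 / A) / (n.factorial : ℝ)) *
          ((K * Real.Gamma (s + 2 / A)) / ((n : ℝ) + 1)) := by
          field_simp
          ring
      _ ≤ (K ^ (n + 1) * Real.Gamma (s + 1 / A) / (n.factorial : ℝ)) *
          ((((n : ℝ) + 1) / 2 * Real.Gamma s) / ((n : ℝ) + 1)) := by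
          apply mul_le_mul_of_nonneg_left _ (by positivity)
          exact div_le_div_of_nonneg_right hinner hn1.le
      _ = 1 / 2 * (K ^ (n + 1) * (Real.Gamma s * Real.Gamma (s + 1 / A)) / (n.factorial : ℝ)) := by
          field_simp
  rw [Real.norm_eq_abs, Real.norm_eq_abs, abs_of_pos (by positivity), abs_of_pos (by positivity)]
  push_cast [Nat.factorial_succ]
  rw [e1, e1', e2]
  exact main

/-- Absolute convergence of the series representation of the density of `𝒜_α`. -/
theorem series_absolute_convergence
    {α x : ℝ} (hα1 : 1 < α) (hα2 : α < 2) (hx : 0 < x) :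
    Summable (fun n : ℕ =>
      (α+1) ^ (((n:ℝ)+1)/(α+1) - 1) * x ^ (-(((n:ℝ)+1)/(α+1)) - 1) *
        |1 / Real.Gamma (1 - ((n:ℝ)+1)/(α+1))| * |1 / Real.Gamma (1 - ((n:ℝ)+2)/(α+1))| /
        (n.factorial : ℝ)) := by
  have hA0 : (0:ℝ) < α + 1 := by linarith
  have hπ := Real.pi_pos
  set K : ℝ := max ((α + 1) / x) 1 with hKdef
  have hK1 : 1 ≤ K := le_max_right _ _
  have hK0 : 0 < K := lt_of_lt_of_le one_pos hK1
  have hg := (summable_majorant (A := α + 1) (by linarith) hK1).mul_left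
    (1 / ((α + 1) * x * Real.pi ^ 2))
  apply Summable.of_nonneg_of_le _ _ hg
  · intro n
    have hfac : (0:ℝ) < (n.factorial : ℝ) := by exact_mod_cast n.factorial_pos
    positivity
  · intro n
    have hfac : (0:ℝ) < (n.factorial : ℝ) := by exact_mod_cast n.factorial_pos
    set s : ℝ := ((n : ℝ) + 1) / (α + 1) with hs_def
    set t : ℝ := ((n : ℝ) + 2) / (α + 1) with ht_def
    have hs0 : 0 < s := by positivity
    have ht0 : 0 < t := by positivity
    have b1 := recip_Gamma_bound hs0
    have b2 := recip_Gamma_bound ht0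
    have hΓ1 := Real.Gamma_pos_of_pos hs0
    have hΓ2 := Real.Gamma_pos_of_pos ht0
    have hpow : (α + 1) ^ (s - 1) * x ^ (-s - 1) ≤ K ^ (n + 1) / ((α + 1) * x) := by
      have h1 : (α + 1) ^ (s - 1) = (α + 1) ^ s / (α + 1) := by
        rw [Real.rpow_sub hA0, Real.rpow_one]
      have h2 : x ^ (-s - 1) = (x ^ s)⁻¹ / x := by
        rw [show -s - 1 = -s - 1 from rfl, Real.rpow_sub hx, Real.rpow_one,
          Real.rpow_neg hx.le]
      have h3 : (α + 1) ^ s * (x ^ s)⁻¹ = ((α + 1) / x) ^ s := by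
        rw [Real.div_rpow hA0.le hx.le, div_eq_mul_inv]
      have h4 : ((α + 1) / x) ^ s ≤ K ^ s :=
        Real.rpow_le_rpow (by positivity) (le_max_left _ _) hs0.le
      have h5 : K ^ s ≤ K ^ ((n : ℝ) + 1) := by
        apply Real.rpow_le_rpow_of_exponent_le hK1
        rw [hs_def, div_le_iff₀ hA0]
        nlinarith [Nat.cast_nonneg (α := ℝ) n]
      have h6 : K ^ ((n : ℝ) + 1) = K ^ (n + 1 : ℕ) := by
        rw [← Real.rpow_natCast K (n + 1)]
        push_cast
        ring_nf
      have h7 : ((α + 1) / x) ^ s ≤ K ^ (n + 1 : ℕ) := by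
        rw [← h6]; exact le_trans h4 h5
      calc (α + 1) ^ (s - 1) * x ^ (-s - 1)
          = ((α + 1) ^ s * (x ^ s)⁻¹) / ((α + 1) * x) := by
            rw [h1, h2, div_mul_div_comm]
        _ = ((α + 1) / x) ^ s / ((α + 1) * x) := by rw [h3]
        _ ≤ K ^ (n + 1) / ((α + 1) * x) := by
            apply div_le_div_of_nonneg_right h7 (by positivity)
    have step : (α+1) ^ (s - 1) * x ^ (-s - 1) * |1 / Real.Gamma (1 - s)| *
        |1 / Real.Gamma (1 - t)| / (n.factorial : ℝ)
        ≤ (K ^ (n + 1) / ((α + 1) * x)) * (Real.Gamma s / Real.pi) *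
          (Real.Gamma t / Real.pi) / (n.factorial : ℝ) := by
      gcongr
    refine le_trans step (le_of_eq ?_)
    show _ = 1 / ((α + 1) * x * Real.pi ^ 2) *
      (K ^ (n + 1) * (Real.Gamma s * Real.Gamma t) / (n.factorial : ℝ))
    field_simp
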